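/- Let M(φ) = φ'' - (3V²(x) + x)φ where V is the Hastings–McLeod solution of Painlevé-II with V > 0 and V' < 0 on ℝ. If w ∈ C²(ℝ) satisfies M(w) ≤ 0 on ℝ and liminf_{|x|→∞} w(x) ≥ 0, then w ≥ 0 on ℝ. -/

import Mathlib

set_option maxHeartbeats 1000000

open Filter Set Real

private lemma mono_aux3 {f f' : ℝ → ℝ} {s : Set ℝ} (hs : Convex ℝ s)
    (hf : ∀ x, HasDerivAt f (f' x) x) (h : ∀ x ∈ interior s, 0 ≤ f' x) : MonotoneOn f s :=
  monotoneOn_of_deriv_nonneg hs (fun x _ => (hf x).continuousAt.continuousWithinAt)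
    (fun x _ => (hf x).differentiableAt.differentiableWithinAt)
    (fun x hx => by rw [(hf x).deriv]; exact h x hx)

private lemma anti_aux3 {f f' : ℝ → ℝ} {s : Set ℝ} (hs : Convex ℝ s)
    (hf : ∀ x, HasDerivAt f (f' x) x) (h : ∀ x ∈ interior s, f' x ≤ 0) : AntitoneOn f s :=
  antitoneOn_of_deriv_nonpos hs (fun x _ => (hf x).continuousAt.continuousWithinAt)
    (fun x _ => (hf x).differentiableAt.differentiableWithinAt)
    (fun x hx => by rw [(hf x).deriv]; exact h x hx)

private lemma strict_aux3 {f f' : ℝ → ℝ} {s : Set ℝ} (hs : Convex ℝ s)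
    (hf : ∀ x, HasDerivAt f (f' x) x) (h : ∀ x ∈ interior s, 0 < f' x) : StrictMonoOn f s :=
  strictMonoOn_of_deriv_pos hs (fun x _ => (hf x).continuousAt.continuousWithinAt)
    (fun x hx => by rw [(hf x).deriv]; exact h x hx)

private lemma slope_left3 {f : ℝ → ℝ} {x₀ b : ℝ} (hf : DifferentiableAt ℝ f b) (hx : x₀ < b)
    (hneg : ∀ y, x₀ ≤ y → y < b → f y < 0) (hfb : f b = 0) : 0 ≤ deriv f b := by
  have ht : Tendsto (slope f b) (nhdsWithin b (Iio b)) (nhds (deriv f b)) :=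
    (hasDerivAt_iff_tendsto_slope.mp hf.hasDerivAt).mono_left
      (nhdsWithin_mono b (fun y hy => ne_of_lt hy))
  refine ge_of_tendsto ht ?_
  filter_upwards [Ioo_mem_nhdsLT_of_mem (show b ∈ Ioc x₀ b from ⟨hx, le_refl b⟩)] with y hy
  have h1 : f y < 0 := hneg y hy.1.le hy.2
  have h2 : y - b < 0 := by linarith [hy.2]
  rw [slope_def_field, hfb, sub_zero]
  exact div_nonneg_iff.mpr (Or.inr ⟨h1.le, h2.le⟩)

private lemma slope_right3 {f : ℝ → ℝ} {a x₀ : ℝ} (hf : DifferentiableAt ℝ f a) (hx : a < x₀)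
    (hneg : ∀ y, a < y → y ≤ x₀ → f y < 0) (hfa : f a = 0) : deriv f a ≤ 0 := by
  have ht : Tendsto (slope f a) (nhdsWithin a (Ioi a)) (nhds (deriv f a)) :=
    (hasDerivAt_iff_tendsto_slope.mp hf.hasDerivAt).mono_left
      (nhdsWithin_mono a (fun y hy => ne_of_gt hy))
  refine le_of_tendsto ht ?_
  filter_upwards [Ioo_mem_nhdsGT_of_mem (show a ∈ Ico a x₀ from ⟨le_refl a, hx⟩)] with y hy
  have h1 : f y < 0 := hneg y hy.1 hy.2.le
  have h2 : 0 < y - a := by linarith [hy.1]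
  rw [slope_def_field, hfa, sub_zero]
  exact div_nonpos_iff.mpr (Or.inr ⟨h1.le, h2.le⟩)

/-- Maximum principle for `M(φ) = φ'' - (3V²+x)φ` with `V` the Hastings–McLeod solution:
if `M(w) ≤ 0` and `liminf_{|x|→∞} w ≥ 0` then `w ≥ 0`. -/
theorem stmt3 (V w : ℝ → ℝ) (hV : ContDiff ℝ 2 V)
    (heq : ∀ x, deriv (deriv V) x = V x * (V x ^ 2 + x))
    (hpos : ∀ x, 0 < V x) (hdec : ∀ x, deriv V x < 0)
    (hbot : Tendsto (fun x => V x - Real.sqrt (-x)) atBot (nhds 0))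
    (htop : Tendsto V atTop (nhds 0))
    (hw : ContDiff ℝ 2 w)
    (hMw : ∀ x, deriv (deriv w) x - (3 * (V x) ^ 2 + x) * w x ≤ 0)
    (hliminf : ∀ ε > (0:ℝ), ∃ R : ℝ, ∀ x : ℝ, R ≤ |x| → -ε ≤ w x) :
    ∀ x, 0 ≤ w x := by
  -- basic differentiability
  have hVd : Differentiable ℝ V := hV.differentiable two_ne_zero
  have hV'd : Differentiable ℝ (deriv V) := by
    have h2 : ContDiff ℝ ((1:WithTop ℕ∞)+1) V := by
      have e : ((1:WithTop ℕ∞)+1) = 2 := by norm_num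
      rw [e]; exact hV
    exact ((contDiff_succ_iff_deriv.mp h2).2.2).differentiable one_ne_zero
  have hwd : Differentiable ℝ w := hw.differentiable two_ne_zero
  have hw'd : Differentiable ℝ (deriv w) := by
    have h2 : ContDiff ℝ ((1:WithTop ℕ∞)+1) w := by
      have e : ((1:WithTop ℕ∞)+1) = 2 := by norm_num
      rw [e]; exact hw
    exact ((contDiff_succ_iff_deriv.mp h2).2.2).differentiable one_ne_zero
  have hVne : ∀ x, V x ≠ 0 := fun x => ne_of_gt (hpos x)
  -- the Wronskian P and the ratio q
  set P : ℝ → ℝ := fun x => w x * deriv V x - deriv w x * V x with hPdef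
  set q : ℝ → ℝ := fun x => -w x / V x with hqdef
  have hwq : ∀ x, w x = -(q x * V x) := by
    intro x; rw [hqdef]; field_simp [hVne x]
  have hqsgn : ∀ x, w x < 0 ↔ 0 < q x := by
    intro x
    constructor
    · intro h; exact div_pos (by linarith) (hpos x)
    · intro h; nlinarith [hpos x, hwq x]
  have hqc : Continuous q := (hwd.continuous.neg).div hVd.continuous hVne
  have hPd : ∀ x, HasDerivAt P (w x * deriv (deriv V) x - deriv (deriv w) x * V x) x := by
    intro x
    have h1 := ((hwd x).hasDerivAt.mul (hV'd x).hasDerivAt).sub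
      ((hw'd x).hasDerivAt.mul (hVd x).hasDerivAt)
    refine h1.congr_deriv ?_; ring
  have hqd : ∀ x, HasDerivAt q (P x / V x ^ 2) x := by
    intro x
    have h1 := ((hwd x).hasDerivAt.neg).div (hVd x).hasDerivAt (hVne x)
    refine h1.congr_deriv ?_
    simp only [hPdef, Pi.neg_apply]; ring
  have hPlb : ∀ x, -(2 * V x ^ 3 * w x) ≤ w x * deriv (deriv V) x - deriv (deriv w) x * V x := by
    intro x
    rw [heq x]
    nlinarith [mul_le_mul_of_nonneg_right
      (show deriv (deriv w) x ≤ (3*V x^2+x)*w x by linarith [hMw x]) (hpos x).le]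
  have hPmono : ∀ s : Set ℝ, Convex ℝ s → (∀ x ∈ interior s, 0 ≤ q x) → MonotoneOn P s := by
    intro s hs h
    refine mono_aux3 hs hPd ?_
    intro x hx
    refine le_trans ?_ (hPlb x)
    rw [hwq x]
    nlinarith [mul_nonneg (h x hx) (pow_pos (hpos x) 4).le]
  have hPstrict : ∀ s : Set ℝ, Convex ℝ s → (∀ x ∈ interior s, 0 < q x) → StrictMonoOn P s := by
    intro s hs h
    refine strict_aux3 hs hPd ?_
    intro x hx
    refine lt_of_lt_of_le ?_ (hPlb x)
    rw [hwq x]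
    nlinarith [mul_pos (h x hx) (pow_pos (hpos x) 4)]
  -- decay estimates for V
  have hVanti : ∀ s t : ℝ, s ≤ t → V t ≤ V s := by
    intro s t hst
    have := anti_aux3 (convex_univ (𝕜 := ℝ) (E := ℝ)) (fun x => (hVd x).hasDerivAt)
      (fun x _ => (hdec x).le)
    exact this (mem_univ s) (mem_univ t) hst
  have hV'mono : MonotoneOn (deriv V) (Ici 0) := by
    refine mono_aux3 (convex_Ici 0) (fun x => (hV'd x).hasDerivAt) ?_
    intro x hx
    rw [interior_Ici] at hx
    rw [heq x]
    nlinarith [hpos x, mem_Ioi.mp hx]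
  have hV'lb : ∀ x : ℝ, 1 ≤ x → V x - V (x-1) ≤ deriv V x := by
    intro x hx
    have ha : AntitoneOn (fun t => V t - deriv V x * t) (Icc (x-1) x) := by
      refine anti_aux3 (convex_Icc _ _) (fun t => ((hVd t).hasDerivAt.sub
        ((hasDerivAt_id t).const_mul (deriv V x)))) ?_
      intro t ht
      rw [interior_Icc] at ht
      have h1 : deriv V t ≤ deriv V x :=
        hV'mono (by rw [mem_Ici]; linarith [ht.1]) (by rw [mem_Ici]; linarith) ht.2.le
      simp only [mul_one]
      linarith
    have h2 := ha (show (x-1) ∈ Icc (x-1) x by rw [mem_Icc]; constructor <;> linarith)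
      (show x ∈ Icc (x-1) x by rw [mem_Icc]; constructor <;> linarith) (by linarith)
    simp only [mul_one] at h2
    nlinarith
  have hV'top : Tendsto (deriv V) atTop (nhds 0) := by
    have l1 : Tendsto (fun x : ℝ => V (x-1)) atTop (nhds 0) := by
      have : Tendsto (fun x : ℝ => x - 1) atTop atTop :=
        tendsto_atTop_add_const_right atTop (-1) tendsto_id
      exact htop.comp this
    have l2 : Tendsto (fun x : ℝ => V x - V (x-1)) atTop (nhds 0) := by
      have := htop.sub l1; simpa using this
    refine tendsto_of_tendsto_of_tendsto_of_le_of_le' l2 tendsto_const_nhds ?_ ?_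
    · filter_upwards [eventually_ge_atTop (1:ℝ)] with x hx using hV'lb x hx
    · filter_upwards with x using (hdec x).le
  have hVV' : ∀ x : ℝ, 1 ≤ x → V x ≤ -deriv V x := by
    have hGd : ∀ x, HasDerivAt (fun y => deriv V y^2 - V y^2)
        (2*deriv V x*deriv (deriv V) x - 2*V x*deriv V x) x := by
      intro x
      have h1 := ((hV'd x).hasDerivAt.pow 2).sub ((hVd x).hasDerivAt.pow 2)
      refine h1.congr_deriv ?_; ring
    have hGanti : AntitoneOn (fun y => deriv V y^2 - V y^2) (Ici 1) := by
      refine anti_aux3 (convex_Ici 1) hGd ?_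
      intro x hx
      rw [interior_Ici] at hx
      rw [heq x]
      have hx1 : (1:ℝ) < x := hx
      nlinarith [hpos x, hdec x, mul_pos (hpos x) (neg_pos.mpr (hdec x)), sq_nonneg (V x)]
    have hGtop : Tendsto (fun y => deriv V y^2 - V y^2) atTop (nhds 0) := by
      have := ((hV'top.mul hV'top).sub (htop.mul htop))
      simp only [mul_zero, sub_zero] at this
      convert this using 2 <;> ring
    intro x hx
    have hG0 : 0 ≤ deriv V x^2 - V x^2 := by
      refine le_of_tendsto hGtop ?_
      filter_upwards [eventually_ge_atTop x] with y hy
      exact hGanti (mem_Ici.mpr hx) (mem_Ici.mpr (hx.trans hy)) hy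
    nlinarith [hpos x, hdec x]
  have hlogd : ∀ t, HasDerivAt (fun y => Real.log (V y) + y) ((V t)⁻¹ * deriv V t + 1) t := by
    intro t
    have h1 := (Real.hasDerivAt_log (hVne t)).comp t (hVd t).hasDerivAt
    exact h1.add (hasDerivAt_id t)
  have hlog : ∀ x y : ℝ, 1 ≤ x → x ≤ y → Real.log (V y) + y ≤ Real.log (V x) + x := by
    have ha : AntitoneOn (fun y => Real.log (V y) + y) (Ici 1) := by
      refine anti_aux3 (convex_Ici 1) hlogd ?_
      intro t ht
      rw [interior_Ici] at ht
      have h1 : V t ≤ -deriv V t := hVV' t (le_of_lt ht)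
      have h2 : (V t)⁻¹ * deriv V t ≤ (V t)⁻¹ * (-V t) :=
        mul_le_mul_of_nonneg_left (by linarith) (inv_nonneg.mpr (hpos t).le)
      have h3 : (V t)⁻¹ * (-V t) = -1 := by rw [mul_neg, inv_mul_cancel₀ (hVne t)]
      linarith
    intro x y hx hxy
    exact ha (mem_Ici.mpr hx) (mem_Ici.mpr (hx.trans hxy)) hxy
  have hVexp : ∀ y : ℝ, 1 ≤ y → V y ≤ V 1 * Real.exp (1 - y) := by
    intro y hy
    have h1 := hlog 1 y le_rfl hy
    have h2 : Real.log (V y) ≤ Real.log (V 1) + (1 - y) := by linarith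
    calc V y = Real.exp (Real.log (V y)) := (Real.exp_log (hpos y)).symm
    _ ≤ Real.exp (Real.log (V 1) + (1 - y)) := Real.exp_le_exp.mpr h2
    _ = V 1 * Real.exp (1 - y) := by rw [Real.exp_add, Real.exp_log (hpos 1)]
  have hxV2 : Tendsto (fun x => x * V x ^ 2) atTop (nhds 0) := by
    have hub : ∀ x : ℝ, 1 ≤ x → x * V x ^ 2 ≤ (V 1^2 * Real.exp 2) * Real.exp (-x) := by
      intro x hx
      have h1 : V x ≤ V 1 * Real.exp (1 - x) := hVexp x hx
      have h2 : x * V x ^ 2 ≤ x * (V 1 * Real.exp (1-x))^2 := by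
        apply mul_le_mul_of_nonneg_left _ (by linarith)
        exact pow_le_pow_left₀ (hpos x).le h1 2
      have h3 : x * Real.exp (-x) ≤ 1 := by
        calc x * Real.exp (-x) ≤ Real.exp x * Real.exp (-x) :=
              mul_le_mul_of_nonneg_right (by linarith [Real.add_one_le_exp x]) (Real.exp_nonneg _)
        _ = 1 := by rw [← Real.exp_add]; simp
      calc x * V x^2 ≤ x * (V 1 * Real.exp (1-x))^2 := h2
      _ = (V 1^2 * Real.exp 2) * ((x * Real.exp (-x)) * Real.exp (-x)) := by
          have hh : Real.exp (1-x) * Real.exp (1-x) = Real.exp 2 * (Real.exp (-x) * Real.exp (-x)) := by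
            rw [← Real.exp_add, ← Real.exp_add, ← Real.exp_add]; ring_nf
          rw [mul_pow, pow_two (Real.exp (1-x)), hh]; ring
      _ ≤ (V 1^2 * Real.exp 2) * (1 * Real.exp (-x)) := by
          apply mul_le_mul_of_nonneg_left _ (by positivity)
          exact mul_le_mul_of_nonneg_right h3 (Real.exp_nonneg _)
      _ = (V 1^2 * Real.exp 2) * Real.exp (-x) := by ring
    have hupper : Tendsto (fun x : ℝ => (V 1^2 * Real.exp 2) * Real.exp (-x)) atTop (nhds 0) := by
      have := Real.tendsto_exp_neg_atTop_nhds_zero.const_mul (V 1^2 * Real.exp 2)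
      simpa using this
    refine tendsto_of_tendsto_of_tendsto_of_le_of_le' tendsto_const_nhds hupper ?_ ?_
    · filter_upwards [eventually_ge_atTop (0:ℝ)] with x hx
      positivity
    · filter_upwards [eventually_ge_atTop (1:ℝ)] with x hx using hub x hx
  have hAd : ∀ x, HasDerivAt (fun y => deriv V y^2 - V y^4/2 - y*V y^2 - V y^2/2)
      (2*deriv V x*deriv (deriv V) x - 2*V x^3*deriv V x - (V x^2 + 2*x*V x*deriv V x)
        - V x*deriv V x) x := by
    intro x
    have h1 := ((((hV'd x).hasDerivAt.pow 2).sub (((hVd x).hasDerivAt.pow 4).div_const 2)).sub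
      ((hasDerivAt_id x).mul ((hVd x).hasDerivAt.pow 2))).sub (((hVd x).hasDerivAt.pow 2).div_const 2)
    refine h1.congr_deriv ?_
    push_cast
    simp only [id_eq, Pi.pow_apply]
    ring
  have hAmono : MonotoneOn (fun y => deriv V y^2 - V y^4/2 - y*V y^2 - V y^2/2) (Ici 1) := by
    refine mono_aux3 (convex_Ici 1) hAd ?_
    intro x hx
    rw [interior_Ici] at hx
    rw [heq x]
    have h1 : V x + deriv V x ≤ 0 := by linarith [hVV' x (le_of_lt hx)]
    nlinarith [mul_nonneg (hpos x).le (neg_nonneg.mpr h1)]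
  have hAtop : Tendsto (fun y => deriv V y^2 - V y^4/2 - y*V y^2 - V y^2/2) atTop (nhds 0) := by
    have t1 := hV'top.mul hV'top
    have t2 := ((htop.mul htop).mul (htop.mul htop)).div_const 2
    have t3 := (htop.mul htop).div_const 2
    have := ((t1.sub t2).sub hxV2).sub t3
    simp only [mul_zero, zero_mul, zero_div, sub_zero, zero_sub, neg_zero] at this
    convert this using 2
    ring
  have hA : ∀ x : ℝ, 1 ≤ x → deriv V x^2 ≤ V x^4/2 + x*V x^2 + V x^2/2 := by
    intro x hx
    have h0 : deriv V x^2 - V x^4/2 - x*V x^2 - V x^2/2 ≤ 0 := by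
      refine ge_of_tendsto hAtop ?_
      filter_upwards [eventually_ge_atTop x] with y hy
      exact hAmono (mem_Ici.mpr hx) (mem_Ici.mpr (hx.trans hy)) hy
    linarith
  obtain ⟨C₁, hC₁def⟩ : ∃ C₁ : ℝ, C₁ = V 1^2/2 + 1/2 := ⟨_, rfl⟩
  have hC₁pos : 0 < C₁ := by rw [hC₁def]; positivity
  have hsb : ∀ x : ℝ, 1 ≤ x → -deriv V x ≤ Real.sqrt (x + C₁) * V x := by
    intro x hx
    have h1 : deriv V x^2 ≤ (x+C₁) * V x^2 := by
      have h2 := hA x hx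
      have h3 : V x ≤ V 1 := hVanti 1 x hx
      rw [hC₁def]
      have h4 : V x^2 ≤ V 1^2 := by nlinarith [hpos x]
      have h5 : V x^2*V x^2 ≤ V 1^2*V x^2 := mul_le_mul_of_nonneg_right h4 (sq_nonneg _)
      nlinarith [h5]
    have hx0 : (0:ℝ) ≤ x + C₁ := by linarith
    calc -deriv V x = Real.sqrt ((deriv V x)^2) := by
          rw [Real.sqrt_sq_eq_abs, abs_of_neg (hdec x)]
    _ ≤ Real.sqrt ((x+C₁)*V x^2) := Real.sqrt_le_sqrt h1
    _ = Real.sqrt (x+C₁) * V x := by rw [Real.sqrt_mul hx0, Real.sqrt_sq (hpos x).le]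
  have hstep : ∀ X : ℝ, 2 ≤ X → Real.log (V (X-1)) - Real.sqrt (X+C₁) ≤ Real.log (V X) := by
    intro X hX
    have hm : MonotoneOn (fun t => Real.log (V t) + Real.sqrt (X+C₁) * t) (Icc (X-1) X) := by
      refine mono_aux3 (convex_Icc _ _) (fun t => ((Real.hasDerivAt_log (hVne t)).comp t
        (hVd t).hasDerivAt).add ((hasDerivAt_id t).const_mul (Real.sqrt (X+C₁)))) ?_
      intro t ht
      rw [interior_Icc] at ht
      have ht1 : (1:ℝ) ≤ t := by linarith [ht.1]
      have h1 : -deriv V t ≤ Real.sqrt (X+C₁) * V t := by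
        refine (hsb t ht1).trans (mul_le_mul_of_nonneg_right ?_ (hpos t).le)
        exact Real.sqrt_le_sqrt (by linarith [ht.2])
      have h2 := mul_le_mul_of_nonneg_left h1 (inv_nonneg.mpr (hpos t).le)
      rw [mul_comm (Real.sqrt (X+C₁)) (V t), ← mul_assoc, inv_mul_cancel₀ (hVne t), one_mul] at h2
      simp only [mul_one]
      linarith
    have h3 := hm (show X-1 ∈ Icc (X-1) X by rw [mem_Icc]; constructor <;> linarith)
      (show X ∈ Icc (X-1) X by rw [mem_Icc]; constructor <;> linarith) (by linarith)
    have h4 : Real.sqrt (X+C₁)*X - Real.sqrt (X+C₁)*(X-1) = Real.sqrt (X+C₁) := by ring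
    simp only at h3
    linarith
  -- liminf data
  obtain ⟨R1, hR1⟩ := hliminf 1 one_pos
  have hbot1 : ∃ Rb : ℝ, ∀ x ≤ Rb, V x ≤ Real.sqrt (-x) + 1 := by
    have h := Metric.tendsto_nhds.mp hbot 1 one_pos
    rw [eventually_atBot] at h
    obtain ⟨Rb, hRb⟩ := h
    refine ⟨Rb, fun x hx => ?_⟩
    have h1 := hRb x hx
    rw [Real.dist_eq, sub_zero] at h1
    have h2 := abs_lt.mp h1
    linarith [h2.2]
  obtain ⟨Rb, hRb⟩ := hbot1
  -- the two growth contradictions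
  have right_contra : ∀ x₁ : ℝ, 1 ≤ x₁ → (∀ x, x₁ ≤ x → 0 < q x) → 0 < P x₁ → False := by
    intro x₁ hx₁ hqp hP₁
    have hPm : MonotoneOn P (Ici x₁) := hPmono _ (convex_Ici _) (by
      rw [interior_Ici]; intro x hx; exact (hqp x (le_of_lt hx)).le)
    have hqlb : ∀ X : ℝ, x₁ + 1 ≤ X → P x₁ / V (X-1)^2 ≤ q X := by
      intro X hX
      have hmm : MonotoneOn (fun t => q t - P x₁ / V (X-1)^2 * t) (Icc (X-1) X) := by
        refine mono_aux3 (convex_Icc _ _)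
          (fun t => (hqd t).sub ((hasDerivAt_id t).const_mul _)) ?_
        intro t ht
        rw [interior_Icc] at ht
        have ht1 : x₁ ≤ t := by linarith [ht.1]
        have h1 : P x₁ ≤ P t := hPm (mem_Ici.mpr le_rfl) (mem_Ici.mpr ht1) ht1
        have h2 : V t ≤ V (X-1) := hVanti (X-1) t (le_of_lt ht.1)
        have h6 : V t^2 ≤ V (X-1)^2 := by nlinarith [hpos t]
        have h7 : P x₁ * V t^2 ≤ P t * V t^2 := mul_le_mul_of_nonneg_right h1 (sq_nonneg _)
        have h8 : P t * V t^2 ≤ P t * V (X-1)^2 :=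
          mul_le_mul_of_nonneg_left h6 (by linarith)
        have h5 : P x₁ / V (X-1)^2 ≤ P t / V t^2 := by
          rw [div_le_div_iff₀ (pow_pos (hpos (X-1)) 2) (pow_pos (hpos t) 2)]
          linarith
        simp only [mul_one]
        linarith
      have h9 := hmm (show X-1 ∈ Icc (X-1) X by rw [mem_Icc]; constructor <;> linarith)
        (show X ∈ Icc (X-1) X by rw [mem_Icc]; constructor <;> linarith) (by linarith)
      simp only at h9
      have h10 : 0 < q (X-1) := hqp (X-1) (by linarith)
      have hid : P x₁/V (X-1)^2*X - P x₁/V (X-1)^2*(X-1) = P x₁/V (X-1)^2 := by ring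
      linarith
    obtain ⟨X, hX1, hX2, hX3, hX4⟩ : ∃ X : ℝ, x₁ + 1 ≤ X ∧ 4 + 2*C₁ ≤ X ∧ |R1| + 2 ≤ X ∧
        2*(3 + Real.log (V 1) - Real.log (P x₁)) ≤ X :=
      ⟨max (max (x₁ + 1) (4 + 2*C₁)) (max (|R1| + 2) (2*(3 + Real.log (V 1) - Real.log (P x₁)))),
        le_trans (le_max_left _ _) (le_max_left _ _),
        le_trans (le_max_right _ _) (le_max_left _ _),
        le_trans (le_max_left _ _) (le_max_right _ _),
        le_trans (le_max_right _ _) (le_max_right _ _)⟩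
    have hX5 : (2:ℝ) ≤ X := by linarith
    have hsqX : Real.sqrt (X + C₁) ≤ X/2 := by
      have h1 : X + C₁ ≤ (X/2)^2 := by
        nlinarith [mul_nonneg (by linarith : (0:ℝ) ≤ X - 4 - 2*C₁) (by linarith : (0:ℝ) ≤ X),
          mul_nonneg (by linarith : (0:ℝ) ≤ X - 2) hC₁pos.le]
      calc Real.sqrt (X+C₁) ≤ Real.sqrt ((X/2)^2) := Real.sqrt_le_sqrt h1
      _ = X/2 := Real.sqrt_sq (by linarith)
    -- show -w X > 1
    have hB : (1:ℝ) < P x₁ * V X / V (X-1)^2 := by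
      have hBpos : 0 < P x₁ * V X / V (X-1)^2 :=
        div_pos (mul_pos hP₁ (hpos X)) (pow_pos (hpos (X-1)) 2)
      have l1 := hstep X hX5
      have l2 : Real.log (V (X-1)) + (X-1) ≤ Real.log (V 1) + 1 := hlog 1 (X-1) le_rfl (by linarith)
      have l3 : Real.log (P x₁ * V X / V (X-1)^2)
          = Real.log (P x₁) + Real.log (V X) - 2*Real.log (V (X-1)) := by
        rw [Real.log_div (mul_pos hP₁ (hpos X)).ne' (pow_ne_zero 2 (hVne (X-1))),
          Real.log_mul (ne_of_gt hP₁) (hVne X), Real.log_pow]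
        push_cast; ring
      have l4 : 0 < Real.log (P x₁ * V X / V (X-1)^2) := by
        rw [l3]
        linarith [l1, l2, hsqX, hX4]
      calc (1:ℝ) = Real.exp 0 := by simp
      _ < Real.exp (Real.log (P x₁ * V X / V (X-1)^2)) := Real.exp_lt_exp.mpr l4
      _ = P x₁ * V X / V (X-1)^2 := Real.exp_log hBpos
    have hwX : -w X = q X * V X := by rw [hwq X]; ring
    have h11 : P x₁ / V (X-1)^2 * V X ≤ q X * V X :=
      mul_le_mul_of_nonneg_right (hqlb X hX1) (hpos X).le
    have h12 : 1 < -w X := by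
      rw [hwX]
      have he : P x₁ / V (X-1)^2 * V X = P x₁ * V X / V (X-1)^2 := by ring
      linarith [hB, h11, he]
    have h13 : -1 ≤ w X := by
      refine hR1 X ?_
      have : (0:ℝ) ≤ X := by linarith
      rw [abs_of_nonneg this]
      linarith [le_abs_self R1]
    linarith
  have left_contra : ∀ x₂ δ : ℝ, 0 < δ → (∀ x, x ≤ x₂ → 0 < q x) →
      (∀ x, x ≤ x₂ → P x ≤ -δ) → False := by
    intro x₂ δ hδ hqp hPle
    have hqlb : ∀ x, x ≤ x₂ → δ*(x₂ - x)/V x^2 ≤ q x := by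
      intro x hx
      have haa : AntitoneOn (fun t => q t + δ/V x^2 * t) (Icc x x₂) := by
        refine anti_aux3 (convex_Icc _ _)
          (fun t => (hqd t).add ((hasDerivAt_id t).const_mul _)) ?_
        intro t ht
        rw [interior_Icc] at ht
        have h2 : V t ≤ V x := hVanti x t ht.1.le
        have h1 : P t ≤ -δ := hPle t ht.2.le
        have h6 : V t^2 ≤ V x^2 := by nlinarith [hpos t]
        have h5 : δ/V x^2 ≤ δ/V t^2 := by
          rw [div_le_div_iff₀ (pow_pos (hpos x) 2) (pow_pos (hpos t) 2)]
          nlinarith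
        have h7 : P t / V t^2 ≤ -(δ/V t^2) := by
          rw [← neg_div]
          exact (div_le_div_iff_of_pos_right (pow_pos (hpos t) 2)).mpr (by linarith)
        simp only [mul_one]
        linarith
      have h9 := haa (show x ∈ Icc x x₂ by rw [mem_Icc]; constructor <;> linarith)
        (show x₂ ∈ Icc x x₂ by rw [mem_Icc]; constructor <;> linarith) hx
      simp only at h9
      have h10 : 0 < q x₂ := hqp x₂ le_rfl
      have hid : δ/V x^2*x₂ - δ/V x^2*x = δ*(x₂-x)/V x^2 := by ring
      linarith
    obtain ⟨Y, hY1, hYRb, hygt, h16, h2abs, hYR1⟩ : ∃ Y : ℝ, Y ≤ x₂ ∧ Y ≤ Rb ∧ 1 < -Y ∧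
        16/δ^2 ≤ -Y ∧ 2*|x₂| ≤ -Y ∧ R1 ≤ -Y := by
      refine ⟨-(1 + 2*|x₂| + 16/δ^2 + |R1| + |Rb|), ?_, ?_, ?_, ?_, ?_, ?_⟩ <;>
      · have h1 : 0 < 16/δ^2 := by positivity
        have h2 := neg_abs_le x₂
        have h3 := le_abs_self R1
        have h3' := abs_nonneg R1
        have h4 := neg_abs_le Rb
        have h5 := abs_nonneg x₂
        have h6 := abs_nonneg Rb
        linarith
    have hVY : V Y ≤ Real.sqrt (-Y) + 1 := hRb Y hYRb
    have hq1 : δ*(x₂ - Y)/V Y^2 ≤ q Y := hqlb Y hY1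
    have hwY : -w Y = q Y * V Y := by rw [hwq Y]; ring
    have hnum : Real.sqrt (-Y) + 1 < δ*(x₂ - Y) := by
      set s := Real.sqrt (-Y) with hsdef
      have hs0 : 0 ≤ s := Real.sqrt_nonneg _
      have hs2 : s^2 = -Y := Real.sq_sqrt (by linarith)
      have hs1 : 1 < s := by nlinarith
      have hsd : 4 ≤ δ * s := by
        have h17 : 16 ≤ (-Y)*δ^2 := (div_le_iff₀ (by positivity)).mp h16
        nlinarith [sq_nonneg (δ*s - 4), mul_nonneg hδ.le hs0]
      have hhalf : (-Y)/2 ≤ x₂ - Y := by linarith [neg_abs_le x₂]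
      have hfin : s + 1 < δ * ((-Y)/2) := by
        nlinarith [mul_nonneg (by linarith : (0:ℝ) ≤ δ*s - 4) (by linarith : (0:ℝ) ≤ s)]
      have hmul : δ * ((-Y)/2) ≤ δ*(x₂ - Y) := mul_le_mul_of_nonneg_left hhalf hδ.le
      linarith
    have h12 : 1 < -w Y := by
      rw [hwY]
      have hq0 : 0 < q Y := hqp Y hY1
      have hVpos := hpos Y
      have hden : 0 < Real.sqrt (-Y) + 1 := by positivity
      have key : δ*(x₂-Y)/(Real.sqrt (-Y)+1) ≤ δ*(x₂-Y)/V Y := by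
        apply div_le_div_of_nonneg_left ?_ hVpos hVY
        nlinarith [Real.sqrt_nonneg (-Y)]
      have key2 : 1 < δ*(x₂-Y)/(Real.sqrt (-Y)+1) := by
        rw [lt_div_iff₀ hden]
        linarith
      have key3 : δ*(x₂-Y)/V Y ≤ q Y * V Y := by
        have e1 : δ*(x₂-Y)/V Y = (δ*(x₂-Y)/V Y^2) * V Y := by
          field_simp
        rw [e1]
        exact mul_le_mul_of_nonneg_right hq1 hVpos.le
      linarith
    have h13 : -1 ≤ w Y := by
      refine hR1 Y ?_
      have hY0 : Y ≤ 0 := by linarith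
      rw [abs_of_nonpos hY0]
      linarith
    linarith
  -- classification of the sign-change structure of q around x₀
  by_contra hcon
  push_neg at hcon
  obtain ⟨x₀, hx₀⟩ := hcon
  have hq₀ : 0 < q x₀ := (hqsgn x₀).mp hx₀
  have hRclass : (∀ x, x₀ ≤ x → 0 < q x) ∨
      (∃ b, x₀ < b ∧ (∀ x, x₀ ≤ x → x < b → 0 < q x) ∧ q b = 0 ∧ P b ≤ 0) := by
    by_cases hex : ∃ x, x₀ ≤ x ∧ q x ≤ 0
    · right
      have hclosed : IsClosed {x | x₀ ≤ x ∧ q x ≤ 0} := by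
        rw [Set.setOf_and]
        exact (isClosed_le continuous_const continuous_id).inter
          (isClosed_le hqc continuous_const)
      have hne : {x | x₀ ≤ x ∧ q x ≤ 0}.Nonempty := hex
      have hbdd : BddBelow {x | x₀ ≤ x ∧ q x ≤ 0} := ⟨x₀, fun y hy => hy.1⟩
      set b := sInf {x | x₀ ≤ x ∧ q x ≤ 0} with hbdef
      have hbS : b ∈ {x | x₀ ≤ x ∧ q x ≤ 0} := hclosed.csInf_mem hne hbdd
      have hblt : ∀ y, x₀ ≤ y → y < b → 0 < q y := by
        intro y h1 h2
        by_contra h3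
        push_neg at h3
        have : b ≤ y := csInf_le hbdd ⟨h1, h3⟩
        linarith
      have hx₀b : x₀ < b := by
        rcases eq_or_lt_of_le hbS.1 with h|h
        · exfalso
          have := hbS.2
          rw [← h] at this
          linarith
        · exact h
      have hqb : q b = 0 := by
        refine le_antisymm hbS.2 ?_
        have ht : Tendsto q (nhdsWithin b (Iio b)) (nhds (q b)) :=
          (hqc.tendsto b).mono_left nhdsWithin_le_nhds
        refine ge_of_tendsto ht ?_
        filter_upwards [Ioo_mem_nhdsLT_of_mem
          (show b ∈ Ioc x₀ b from ⟨hx₀b, le_rfl⟩)] with y hy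
        exact (hblt y hy.1.le hy.2).le
      have hwb : w b = 0 := by rw [hwq b, hqb]; ring
      have hw' : 0 ≤ deriv w b := by
        refine slope_left3 (hwd b) hx₀b ?_ hwb
        intro y h1 h2
        exact (hqsgn y).mpr (hblt y h1 h2)
      refine ⟨b, hx₀b, hblt, hqb, ?_⟩
      show w b * deriv V b - deriv w b * V b ≤ 0
      rw [hwb]
      nlinarith [mul_nonneg hw' (hpos b).le]
    · left
      push_neg at hex
      exact hex
  have hLclass : (∀ x, x ≤ x₀ → 0 < q x) ∨
      (∃ a, a < x₀ ∧ (∀ x, a < x → x ≤ x₀ → 0 < q x) ∧ q a = 0 ∧ 0 ≤ P a) := by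
    by_cases hex : ∃ x, x ≤ x₀ ∧ q x ≤ 0
    · right
      have hclosed : IsClosed {x | x ≤ x₀ ∧ q x ≤ 0} := by
        rw [Set.setOf_and]
        exact (isClosed_le continuous_id continuous_const).inter
          (isClosed_le hqc continuous_const)
      have hne : {x | x ≤ x₀ ∧ q x ≤ 0}.Nonempty := hex
      have hbdd : BddAbove {x | x ≤ x₀ ∧ q x ≤ 0} := ⟨x₀, fun y hy => hy.1⟩
      set a := sSup {x | x ≤ x₀ ∧ q x ≤ 0} with hadef
      have haS : a ∈ {x | x ≤ x₀ ∧ q x ≤ 0} := hclosed.csSup_mem hne hbdd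
      have halt : ∀ y, a < y → y ≤ x₀ → 0 < q y := by
        intro y h2 h1
        by_contra h3
        push_neg at h3
        have : y ≤ a := le_csSup hbdd ⟨h1, h3⟩
        linarith
      have hax₀ : a < x₀ := by
        rcases eq_or_lt_of_le haS.1 with h|h
        · exfalso
          have := haS.2
          rw [h] at this
          linarith
        · exact h
      have hqa : q a = 0 := by
        refine le_antisymm haS.2 ?_
        have ht : Tendsto q (nhdsWithin a (Ioi a)) (nhds (q a)) :=
          (hqc.tendsto a).mono_left nhdsWithin_le_nhds
        refine ge_of_tendsto ht ?_
        filter_upwards [Ioo_mem_nhdsGT_of_mem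
          (show a ∈ Ico a x₀ from ⟨le_rfl, hax₀⟩)] with y hy
        exact (halt y hy.1 hy.2.le).le
      have hwa : w a = 0 := by rw [hwq a, hqa]; ring
      have hw' : deriv w a ≤ 0 := by
        refine slope_right3 (hwd a) hax₀ ?_ hwa
        intro y h1 h2
        exact (hqsgn y).mpr (halt y h1 h2)
      refine ⟨a, hax₀, halt, hqa, ?_⟩
      show 0 ≤ w a * deriv V a - deriv w a * V a
      rw [hwa]
      nlinarith [mul_nonpos_of_nonpos_of_nonneg hw' (hpos a).le]
    · left
      push_neg at hex
      exact hex
  rcases hLclass with hL | ⟨a, hax₀, haq, hqa, hPa⟩ <;>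
    rcases hRclass with hR | ⟨b, hx₀b, hbq, hqb, hPb⟩
  · -- q positive everywhere
    have qall : ∀ x, 0 < q x := fun x =>
      (le_total x x₀).elim (fun h => hL x h) (fun h => hR x h)
    rcases le_or_gt (P 2) 0 with h2 | h2
    · have h12 : P 1 < P 2 := by
        refine hPstrict (Icc 1 2) (convex_Icc 1 2) (fun x _ => qall x) ?_ ?_ one_lt_two
        · rw [mem_Icc]; constructor <;> norm_num
        · rw [mem_Icc]; constructor <;> norm_num
      have hm : MonotoneOn P (Iic 1) := hPmono _ (convex_Iic 1) (fun x _ => (qall x).le)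
      refine left_contra 1 (-(P 1)) (by linarith) (fun x _ => qall x) (fun x hx => ?_)
      have := hm (mem_Iic.mpr hx) (mem_Iic.mpr le_rfl) hx
      linarith
    · exact right_contra 2 one_le_two (fun x _ => qall x) h2
  · -- q positive on (-∞, b), q b = 0
    have qlt : ∀ x, x < b → 0 < q x := fun x hx =>
      (le_total x x₀).elim (fun h => hL x h) (fun h => hbq x h hx)
    have hPb1 : P (b-1) < P b := by
      refine hPstrict (Icc (b-1) b) (convex_Icc _ _) (fun x hx => ?_) ?_ ?_ (by linarith)
      · rw [interior_Icc] at hx; exact qlt x hx.2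
      · rw [mem_Icc]; constructor <;> linarith
      · rw [mem_Icc]; constructor <;> linarith
    have hm : MonotoneOn P (Iic b) := by
      refine hPmono _ (convex_Iic b) (fun x hx => ?_)
      rw [interior_Iic, mem_Iio] at hx
      exact (qlt x hx).le
    refine left_contra (b-1) (-(P (b-1))) (by linarith)
      (fun x hx => qlt x (by linarith)) (fun x hx => ?_)
    have := hm (mem_Iic.mpr (by linarith : x ≤ b)) (mem_Iic.mpr (by linarith)) hx
    linarith
  · -- q positive on (a, ∞), q a = 0
    have qgt : ∀ x, a < x → 0 < q x := fun x hx =>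
      (le_total x x₀).elim (fun h => haq x hx h) (fun h => hR x h)
    have hax₁ : a < max (a+1) 1 := lt_of_lt_of_le (by linarith) (le_max_left _ _)
    have hP₁ : 0 < P (max (a+1) 1) := by
      refine lt_of_le_of_lt hPa ?_
      refine hPstrict (Icc a (max (a+1) 1)) (convex_Icc _ _) (fun x hx => ?_) ?_ ?_ hax₁
      · rw [interior_Icc] at hx; exact qgt x hx.1
      · rw [mem_Icc]; exact ⟨le_rfl, hax₁.le⟩
      · rw [mem_Icc]; exact ⟨hax₁.le, le_rfl⟩
    exact right_contra (max (a+1) 1) (le_max_right _ _)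
      (fun x hx => qgt x (lt_of_lt_of_le hax₁ hx)) hP₁
  · -- q positive on (a, b), zero at both ends
    have qmid : ∀ x, a < x → x < b → 0 < q x := fun x h1 h2 =>
      (le_total x x₀).elim (fun h => haq x h1 h) (fun h => hbq x h h2)
    have hab : P a < P b := by
      refine hPstrict (Icc a b) (convex_Icc _ _) (fun x hx => ?_) ?_ ?_ (by linarith)
      · rw [interior_Icc] at hx; exact qmid x hx.1 hx.2
      · rw [mem_Icc]; constructor <;> linarith
      · rw [mem_Icc]; constructor <;> linarith
    linarith
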